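/- arXiv:1602.03986 — 3 statements merged into one kernel-verified Lean document; each statement's English description precedes it below -/
import Mathlib

section
/- For a sos form f of degree 2d, the set U_f of degree-d forms p such that f - c·p^2 is sos for some real c > 0 is a linear subspace of R[x]_d. -/
open MvPolynomial Finsupp

/-- `f` is a sum of squares of forms of degree `d` in `n` variables. -/
def IsSOSForm (n d : ℕ) (f : MvPolynomial (Fin n) ℝ) : Prop :=
  ∃ (N : ℕ) (g : Fin N → MvPolynomial (Fin n) ℝ),
    (∀ i, (g i).IsHomogeneous d) ∧ f = ∑ i, (g i) ^ 2

/-- The cone `Σ_{2d}` of sums of squares of degree-`d` forms, as a subset of the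
finite-dimensional real vector space `R[x]_{2d}` of forms of degree `2d`. -/
def SigmaCone (n d : ℕ) : Set (homogeneousSubmodule (Fin n) ℝ (2 * d)) :=
  {f | IsSOSForm n d (f : MvPolynomial (Fin n) ℝ)}

/-- The canonical topology on the finite-dimensional real vector space of forms. -/
noncomputable instance (n d : ℕ) : TopologicalSpace (homogeneousSubmodule (Fin n) ℝ d) :=
  moduleTopology ℝ _

/-- A form is positive definite if it is positive away from the origin. -/
def PosDefForm (n : ℕ) (f : MvPolynomial (Fin n) ℝ) : Prop :=
  ∀ x : Fin n → ℝ, x ≠ 0 → 0 < eval x f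

/-- For a sos form `f` of degree `2d`, the set `U_f` of forms `p` of degree `d`
such that `f - c p ^ 2` is sos for some `c > 0`. -/
def Uset (n d : ℕ) (f : MvPolynomial (Fin n) ℝ) : Set (MvPolynomial (Fin n) ℝ) :=
  {p | p.IsHomogeneous d ∧ ∃ c : ℝ, 0 < c ∧ IsSOSForm n d (f - c • p ^ 2)}

lemma IsSOSForm.add' {n d : ℕ} {f g : MvPolynomial (Fin n) ℝ}
    (hf : IsSOSForm n d f) (hg : IsSOSForm n d g) : IsSOSForm n d (f + g) := by
  obtain ⟨N, u, hu, rfl⟩ := hf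
  obtain ⟨M, v, hv, rfl⟩ := hg
  refine ⟨N + M, Fin.append u v, ?_, ?_⟩
  · intro i
    refine Fin.addCases (fun i => ?_) (fun i => ?_) i
    · simpa [Fin.append_left] using hu i
    · simpa [Fin.append_right] using hv i
  · rw [Fin.sum_univ_add]
    simp [Fin.append_left, Fin.append_right]

lemma homog_smul {n d : ℕ} {p : MvPolynomial (Fin n) ℝ} (hp : p.IsHomogeneous d) (t : ℝ) :
    (t • p).IsHomogeneous d := by
  rw [smul_eq_C_mul]; exact hp.C_mul t

lemma IsSOSForm.smul' {n d : ℕ} {f : MvPolynomial (Fin n) ℝ}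
    (hf : IsSOSForm n d f) {c : ℝ} (hc : 0 ≤ c) : IsSOSForm n d (c • f) := by
  obtain ⟨N, u, hu, rfl⟩ := hf
  refine ⟨N, fun i => Real.sqrt c • u i, fun i => homog_smul (hu i) _, ?_⟩
  rw [Finset.smul_sum]
  congr 1; funext i
  rw [smul_pow, Real.sq_sqrt hc]

lemma IsSOSForm.sq {n d : ℕ} {p : MvPolynomial (Fin n) ℝ} (hp : p.IsHomogeneous d) :
    IsSOSForm n d (p ^ 2) :=
  ⟨1, fun _ => p, fun _ => hp, by simp⟩

lemma Uset_key {n : ℕ} (f p q : MvPolynomial (Fin n) ℝ) (c₁ c₂ : ℝ) :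
    f - (min c₁ c₂/4) • (p+q)^2 = (1/2:ℝ) • (f - c₁ • p^2) + (1/2:ℝ) • (f - c₂ • q^2)
      + ((c₁ - min c₁ c₂)/2) • p^2 + ((c₂ - min c₁ c₂)/2) • q^2 + (min c₁ c₂/4) • (p-q)^2 := by
  generalize min c₁ c₂ = m
  have e1 : (p+q)^2 = p^2 + (2:ℝ) • (p*q) + q^2 := by rw [two_smul]; ring
  have e2 : (p-q)^2 = p^2 - (2:ℝ) • (p*q) + q^2 := by rw [two_smul]; ring
  rw [e1, e2]
  module

theorem Uset_is_subspace (n d : ℕ) (f : MvPolynomial (Fin n) ℝ)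
    (hf : f.IsHomogeneous (2 * d)) (hsos : IsSOSForm n d f) :
    ∃ U : Submodule ℝ (MvPolynomial (Fin n) ℝ), (U : Set (MvPolynomial (Fin n) ℝ)) = Uset n d f := by
  have hzero : (0 : MvPolynomial (Fin n) ℝ) ∈ Uset n d f :=
    ⟨isHomogeneous_zero _ _ _, 1, one_pos, by simpa using hsos⟩
  refine ⟨{ carrier := Uset n d f
            zero_mem' := hzero
            add_mem' := ?_
            smul_mem' := ?_ }, rfl⟩
  · rintro p q ⟨hp, c₁, hc₁, h₁⟩ ⟨hq, c₂, hc₂, h₂⟩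
    have hm : 0 < min c₁ c₂ := lt_min hc₁ hc₂
    refine ⟨hp.add hq, min c₁ c₂ / 4, by positivity, ?_⟩
    rw [Uset_key f p q c₁ c₂]
    have s1 : IsSOSForm n d ((1/2:ℝ) • (f - c₁ • p^2)) := h₁.smul' (by norm_num)
    have s2 : IsSOSForm n d ((1/2:ℝ) • (f - c₂ • q^2)) := h₂.smul' (by norm_num)
    have s3 : IsSOSForm n d (((c₁ - min c₁ c₂)/2) • p^2) :=
      (IsSOSForm.sq hp).smul' (by have := min_le_left c₁ c₂; linarith)
    have s4 : IsSOSForm n d (((c₂ - min c₁ c₂)/2) • q^2) :=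
      (IsSOSForm.sq hq).smul' (by have := min_le_right c₁ c₂; linarith)
    have s5 : IsSOSForm n d ((min c₁ c₂/4) • (p-q)^2) :=
      (IsSOSForm.sq (hp.sub hq)).smul' (by positivity)
    exact ((((s1.add' s2).add' s3).add' s4).add' s5)
  · rintro t p ⟨hp, c, hc, h⟩
    by_cases ht : t = 0
    · subst ht
      rw [zero_smul]
      exact hzero
    · refine ⟨homog_smul hp t, c / t^2, div_pos hc (by positivity), ?_⟩
      rw [show (c/t^2) • (t • p)^2 = c • p^2 by
        rw [smul_pow, smul_smul]; congr 1; field_simp]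
      exact h
end

section
/- For every e ≥ 1 and every c > 0, the form c·(x_1^2 + ... + x_n^2)^e lies in the interior of the sums-of-squares cone Σ_{2e}. -/
open MvPolynomial Finsupp

namespace SOSAux

variable {n : ℕ}

lemma sos_zero (d : ℕ) : IsSOSForm n d 0 :=
  ⟨0, fun i => 0, fun i => i.elim0, by simp⟩

lemma sos_of_fintype {d : ℕ} {ι : Type} [Fintype ι] (g : ι → MvPolynomial (Fin n) ℝ)
    (hg : ∀ i, (g i).IsHomogeneous d) : IsSOSForm n d (∑ i, g i ^ 2) := by
  classical
  obtain ⟨N, ⟨e⟩⟩ : ∃ N, Nonempty (ι ≃ Fin N) := ⟨Fintype.card ι, ⟨Fintype.equivFin ι⟩⟩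
  exact ⟨N, fun j => g (e.symm j), fun j => hg _,
    (Equiv.sum_comp e.symm (fun i => g i ^ 2)).symm⟩

lemma sos_of_finset {d : ℕ} {ι : Type} (s : Finset ι) (g : ι → MvPolynomial (Fin n) ℝ)
    (hg : ∀ i ∈ s, (g i).IsHomogeneous d) : IsSOSForm n d (∑ i ∈ s, g i ^ 2) := by
  classical
  rw [← Finset.sum_attach s (fun i => g i ^ 2)]
  exact sos_of_fintype (fun i : s => g i) (fun i => hg i i.2)

lemma sos_add {d : ℕ} {f f' : MvPolynomial (Fin n) ℝ}
    (hf : IsSOSForm n d f) (hf' : IsSOSForm n d f') : IsSOSForm n d (f + f') := by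
  obtain ⟨N, g, hg, rfl⟩ := hf
  obtain ⟨M, h, hh, rfl⟩ := hf'
  have hs : ∑ i : Fin N ⊕ Fin M, Sum.elim g h i ^ 2
      = ∑ i, g i ^ 2 + ∑ i, h i ^ 2 := by
    rw [Fintype.sum_sum_type]
    simp
  rw [← hs]
  exact sos_of_fintype (Sum.elim g h) (fun i => by cases i <;> simp [hg, hh])

lemma sos_sum {d : ℕ} {ι : Type} (s : Finset ι) (F : ι → MvPolynomial (Fin n) ℝ)
    (h : ∀ i ∈ s, IsSOSForm n d (F i)) : IsSOSForm n d (∑ i ∈ s, F i) := by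
  classical
  induction s using Finset.induction with
  | empty => simpa using sos_zero d
  | insert _ _ hx ih =>
    rw [Finset.sum_insert hx]
    exact sos_add (h _ (Finset.mem_insert_self _ _))
      (ih fun i hi => h i (Finset.mem_insert_of_mem hi))

lemma sos_smul {d : ℕ} {f : MvPolynomial (Fin n) ℝ} {t : ℝ} (ht : 0 ≤ t)
    (hf : IsSOSForm n d f) : IsSOSForm n d (t • f) := by
  obtain ⟨N, g, hg, rfl⟩ := hf
  refine ⟨N, fun i => Real.sqrt t • g i, fun i =>
    (homogeneousSubmodule (Fin n) ℝ d).smul_mem _ (hg i), ?_⟩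
  rw [Finset.smul_sum]
  refine Finset.sum_congr rfl fun i _ => ?_
  rw [smul_pow, Real.sq_sqrt ht]

lemma sos_mul {d d' : ℕ} {f f' : MvPolynomial (Fin n) ℝ}
    (hf : IsSOSForm n d f) (hf' : IsSOSForm n d' f') : IsSOSForm n (d + d') (f * f') := by
  obtain ⟨N, g, hg, rfl⟩ := hf
  obtain ⟨M, h, hh, rfl⟩ := hf'
  rw [Finset.sum_mul_sum]
  have : ∀ i j, g i ^ 2 * h j ^ 2 = (g i * h j) ^ 2 := fun i j => (mul_pow _ _ _).symm
  simp_rw [this]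
  rw [← Fintype.sum_prod_type']
  exact sos_of_fintype (fun p : Fin N × Fin M => g p.1 * h p.2)
    (fun p => (hg p.1).mul (hh p.2))

lemma sos_sq {d : ℕ} {p : MvPolynomial (Fin n) ℝ} (hp : p.IsHomogeneous d) :
    IsSOSForm n d (p ^ 2) :=
  ⟨1, fun _ => p, fun _ => hp, by simp⟩

lemma sos_base : IsSOSForm n 1 (∑ i : Fin n, X i ^ 2 : MvPolynomial (Fin n) ℝ) :=
  sos_of_fintype (fun i => X i) (fun i => isHomogeneous_X ℝ i)

lemma sos_pow (e : ℕ) : IsSOSForm n e ((∑ i : Fin n, X i ^ 2 : MvPolynomial (Fin n) ℝ) ^ e) := by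
  induction e with
  | zero => simpa using sos_sq (isHomogeneous_one (Fin n) ℝ)
  | succ e ih =>
    rw [pow_succ]
    have := sos_mul ih sos_base
    simpa using this

lemma degree_add {σ : Type*} (a b : σ →₀ ℕ) : (a + b).degree = a.degree + b.degree := by
  simp only [Finsupp.degree_eq_weight_one]
  exact map_add _ a b

lemma degree_single (j : Fin n) : (Finsupp.single j 1).degree = 1 := by
  rw [Finsupp.degree_apply, Finsupp.support_single_ne_zero _ one_ne_zero, Finset.sum_singleton,
    Finsupp.single_eq_same]

lemma sos_pow_sub_sq : ∀ (e : ℕ) (β : Fin n →₀ ℕ), β.degree = e →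
    IsSOSForm n e ((∑ i : Fin n, X i ^ 2 : MvPolynomial (Fin n) ℝ) ^ e
      - (monomial β (1 : ℝ)) ^ 2) := by
  intro e
  induction e with
  | zero =>
    intro β hβ
    rw [Finsupp.degree_eq_zero_iff] at hβ
    subst hβ
    simpa using sos_zero (n := n) 0
  | succ e ih =>
    intro β hβ
    have hβ0 : β ≠ 0 := by
      intro h; rw [h, map_zero] at hβ; omega
    obtain ⟨j, hj⟩ : ∃ j, β j ≠ 0 := by
      by_contra h; push_neg at h
      exact hβ0 (Finsupp.ext fun a => h a)
    set β' : Fin n →₀ ℕ := β - Finsupp.single j 1 with hβ'def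
    have hsum : Finsupp.single j 1 + β' = β := by
      ext a
      rcases eq_or_ne a j with rfl | hne
      · simp only [Finsupp.add_apply, hβ'def, Finsupp.tsub_apply, Finsupp.single_eq_same]
        omega
      · simp [hβ'def, Finsupp.tsub_apply, Finsupp.single_eq_of_ne' (Ne.symm hne)]
    have hβ'd : β'.degree = e := by
      have h1 := degree_add (Finsupp.single j 1) β'
      rw [hsum, degree_single] at h1
      omega
    have hm : (monomial β (1 : ℝ)) = X j * monomial β' 1 := by
      rw [X, monomial_mul, one_mul, hsum]
    have hid : (∑ i : Fin n, X i ^ 2 : MvPolynomial (Fin n) ℝ) ^ (e + 1) - (monomial β 1) ^ 2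
        = (∑ i : Fin n, X i ^ 2) * ((∑ i : Fin n, X i ^ 2) ^ e - (monomial β' 1) ^ 2)
          + ∑ i ∈ Finset.univ.erase j, (X i * monomial β' 1) ^ 2 := by
      have h1 : (∑ i ∈ Finset.univ.erase j, (X i * monomial β' (1 : ℝ)) ^ 2)
          = (∑ i : Fin n, (X i * monomial β' 1) ^ 2) - (X j * monomial β' 1) ^ 2 := by
        have h0 := Finset.add_sum_erase Finset.univ (fun i => (X i * monomial β' (1 : ℝ)) ^ 2)
          (Finset.mem_univ j)
        rw [eq_sub_iff_add_eq]
        exact (add_comm _ _).trans h0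
      have h2 : (∑ i : Fin n, (X i * monomial β' (1 : ℝ)) ^ 2)
          = (∑ i : Fin n, X i ^ 2) * (monomial β' 1) ^ 2 := by
        rw [Finset.sum_mul]
        exact Finset.sum_congr rfl fun i _ => (mul_pow _ _ _)
      rw [h1, h2, hm]
      ring
    rw [hid]
    refine sos_add ?_ (sos_of_finset _ _ fun i _ => ?_)
    · have := sos_mul sos_base (ih β' hβ'd)
      rwa [Nat.add_comm 1 e] at this
    · have h := (isHomogeneous_X ℝ i).mul (isHomogeneous_monomial (1 : ℝ) hβ'd)
      rwa [Nat.add_comm 1 e] at h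

lemma exists_le_degree (α : Fin n →₀ ℕ) :
    ∀ k, k ≤ α.degree → ∃ β, β ≤ α ∧ β.degree = k := by
  intro k
  induction k with
  | zero => exact fun _ => ⟨0, zero_le, map_zero _⟩
  | succ k ih =>
    intro hk
    obtain ⟨β, hβle, hβd⟩ := ih (by omega)
    obtain ⟨j, hj⟩ : ∃ j, β j < α j := by
      by_contra h; push_neg at h
      have : β = α := le_antisymm hβle (Finsupp.le_def.mpr h)
      rw [this] at hβd; omega
    refine ⟨β + Finsupp.single j 1, ?_, ?_⟩
    · refine Finsupp.le_def.mpr fun a => ?_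
      rcases eq_or_ne a j with rfl | hne
      · simp only [Finsupp.add_apply, Finsupp.single_eq_same]; omega
      · simp only [Finsupp.add_apply, Finsupp.single_eq_of_ne' (Ne.symm hne), add_zero]
        exact Finsupp.le_def.mp hβle a
    · rw [degree_add, degree_single, hβd]

lemma sos_lam (e : ℕ) (α : Fin n →₀ ℕ) (hα : α.degree = 2 * e) (lam a : ℝ)
    (ha : |a| ≤ lam) :
    IsSOSForm n e (lam • (∑ i : Fin n, X i ^ 2 : MvPolynomial (Fin n) ℝ) ^ e
      + a • monomial α 1) := by
  obtain ⟨β, hβle, hβd⟩ := exists_le_degree α e (by omega)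
  set γ : Fin n →₀ ℕ := α - β with hγdef
  have hsum : β + γ = α := by
    ext i
    have := Finsupp.le_def.mp hβle i
    simp only [Finsupp.add_apply, hγdef, Finsupp.tsub_apply]
    omega
  have hγd : γ.degree = e := by
    have h1 := degree_add β γ
    rw [hsum, hα, hβd] at h1
    omega
  have hmono : monomial α (1 : ℝ) = monomial β 1 * monomial γ 1 := by
    rw [monomial_mul, one_mul, hsum]
  set s : ℝ := if 0 ≤ a then 1 else -1 with hs
  have hCs : C (s : ℝ) * C s = (1 : MvPolynomial (Fin n) ℝ) := by
    rw [← C_mul, ← C_1]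
    congr 1
    by_cases h : 0 ≤ a <;> simp [hs, h]
  have hCa : (C a : MvPolynomial (Fin n) ℝ) = (C (|a| / 2) + C (|a| / 2)) * C s := by
    rw [← C_add, ← C_mul]
    congr 1
    by_cases h : 0 ≤ a
    · rw [abs_of_nonneg h]; simp only [hs, if_pos h]; ring
    · rw [abs_of_neg (lt_of_not_ge h)]; simp only [hs, if_neg h]; ring
  have h3 : (C |a| : MvPolynomial (Fin n) ℝ) = C (|a| / 2) + C (|a| / 2) := by
    rw [← C_add]
    congr 1
    ring
  set P : MvPolynomial (Fin n) ℝ := (∑ i : Fin n, X i ^ 2) ^ e with hPdef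
  have hid : lam • P + a • monomial α 1
      = (lam - |a|) • P
        + (|a| / 2) • (P - (monomial β 1) ^ 2)
        + (|a| / 2) • (P - (monomial γ 1) ^ 2)
        + (|a| / 2) • (monomial β 1 + s • monomial γ 1) ^ 2 := by
    rw [hmono]
    simp only [smul_eq_C_mul]
    rw [map_sub]
    linear_combination (monomial β (1:ℝ) * monomial γ 1) * hCa + P * h3
      - (C (|a| / 2) * (monomial γ (1:ℝ)) ^ 2) * hCs
  rw [hid]
  have habs : (0 : ℝ) ≤ |a| / 2 := by positivity
  refine sos_add (sos_add (sos_add ?_ ?_) ?_) ?_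
  · exact sos_smul (by linarith) (sos_pow e)
  · exact sos_smul habs (sos_pow_sub_sq e β hβd)
  · exact sos_smul habs (sos_pow_sub_sq e γ hγd)
  · refine sos_smul habs (sos_sq ?_)
    exact (isHomogeneous_monomial _ hβd).add
      ((homogeneousSubmodule (Fin n) ℝ e).smul_mem s (isHomogeneous_monomial _ hγd))

end SOSAux

open SOSAux

theorem smul_power_sum_sq_mem_interior (n e : ℕ) (he : 1 ≤ e) (c : ℝ) (hc : 0 < c)
    (hmem : C c * (∑ i : Fin n, X i ^ 2) ^ e ∈ homogeneousSubmodule (Fin n) ℝ (2 * e)) :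
    (⟨C c * (∑ i : Fin n, X i ^ 2) ^ e, hmem⟩ : homogeneousSubmodule (Fin n) ℝ (2 * e))
      ∈ interior (SigmaCone n e) := by
  classical
  set P : MvPolynomial (Fin n) ℝ := (∑ i : Fin n, X i ^ 2) ^ e with hPdef
  set f : MvPolynomial (Fin n) ℝ := C c * P with hfdef
  set top : Fin n →₀ ℕ := Finsupp.equivFunOnFinite.symm (fun _ => 2 * e) with htop
  set D : Finset (Fin n →₀ ℕ) := Finset.Iic top with hD
  have hD0 : (0 : Fin n →₀ ℕ) ∈ D := Finset.mem_Iic.2 zero_le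
  have hM : 0 < D.card := Finset.card_pos.2 ⟨0, hD0⟩
  have hMR : (0 : ℝ) < (D.card : ℝ) := Nat.cast_pos.2 hM
  set ε : ℝ := c / D.card with hε
  have hε0 : 0 < ε := div_pos hc hMR
  set V := homogeneousSubmodule (Fin n) ℝ (2 * e)
  set U : Set V := {g | ∀ α ∈ D, |coeff α ((g : MvPolynomial (Fin n) ℝ)) - coeff α f| < ε}
    with hU
  have hmemD : ∀ α : Fin n →₀ ℕ, α.degree = 2 * e → α ∈ D := by
    intro α hα
    refine Finset.mem_Iic.2 (Finsupp.le_def.mpr fun i => ?_)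
    have h1 := Finsupp.le_degree i α
    have h2 : top i = 2 * e := rfl
    omega
  refine mem_interior.2 ⟨U, ?_, ?_, ?_⟩
  · -- U ⊆ SigmaCone n e
    rintro g hg
    set q : MvPolynomial (Fin n) ℝ := (g : MvPolynomial (Fin n) ℝ) - f with hq
    have hqh : q.IsHomogeneous (2 * e) := (homogeneousSubmodule (Fin n) ℝ (2 * e)).sub_mem g.2 hmem
    have hsupp : q.support ⊆ D := by
      intro α hα
      refine hmemD α ?_
      by_contra h
      exact (MvPolynomial.mem_support_iff.1 hα) (hqh.coeff_eq_zero h)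
    have hdecomp : (g : MvPolynomial (Fin n) ℝ)
        = ∑ α ∈ D, ((c / D.card) • P + (coeff α q) • monomial α 1) := by
      rw [Finset.sum_add_distrib, Finset.sum_const]
      have h1 : D.card • ((c / D.card) • P) = C c * P := by
        rw [← Nat.cast_smul_eq_nsmul ℝ, smul_smul, mul_div_cancel₀ c (ne_of_gt hMR),
          smul_eq_C_mul]
      have h2 : ∑ α ∈ D, (coeff α q) • monomial α (1 : ℝ) = q := by
        have h3 : ∀ α : Fin n →₀ ℕ, (coeff α q) • monomial α (1 : ℝ) = monomial α (coeff α q) := by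
          intro α; rw [smul_monomial, smul_eq_mul, mul_one]
        simp_rw [h3]
        rw [eq_comm]
        nth_rewrite 1 [q.as_sum]
        exact Finset.sum_subset hsupp fun x _ hx => by
          rw [MvPolynomial.notMem_support_iff.1 hx, map_zero]
      rw [h1, h2, hq, hfdef]
      ring
    show IsSOSForm n e ((g : MvPolynomial (Fin n) ℝ))
    rw [hdecomp]
    refine sos_sum D _ fun α hα => ?_
    by_cases hα2 : α.degree = 2 * e
    · refine sos_lam e α hα2 (c / D.card) (coeff α q) ?_
      have h4 := hg α hα
      have h5 : coeff α q = coeff α ((g : MvPolynomial (Fin n) ℝ)) - coeff α f := by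
        rw [hq, MvPolynomial.coeff_sub]
      rw [h5]
      exact le_of_lt h4
    · have hz : coeff α q = 0 := hqh.coeff_eq_zero hα2
      rw [hz, zero_smul, add_zero]
      exact sos_smul (le_of_lt (div_pos hc hMR)) (sos_pow e)
  · -- U is open
    haveI : IsModuleTopology ℝ V := ⟨rfl⟩
    have hcont : ∀ α : Fin n →₀ ℕ,
        Continuous (fun g : V => coeff α ((g : MvPolynomial (Fin n) ℝ))) := fun α =>
      IsModuleTopology.continuous_of_linearMap
        ((MvPolynomial.lcoeff ℝ α).comp (Submodule.subtype _))
    have hUeq : U = ⋂ α ∈ D,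
        {g : V | |coeff α ((g : MvPolynomial (Fin n) ℝ)) - coeff α f| < ε} := by
      ext g
      simp [hU, Set.mem_iInter]
    rw [hUeq]
    refine isOpen_biInter_finset fun α _ => ?_
    have heq : {g : V | |coeff α ((g : MvPolynomial (Fin n) ℝ)) - coeff α f| < ε}
        = (fun g : V => coeff α ((g : MvPolynomial (Fin n) ℝ)) - coeff α f) ⁻¹'
          {x : ℝ | |x| < ε} := rfl
    rw [heq]
    exact IsOpen.preimage ((hcont α).sub continuous_const)
      (IsOpen.preimage continuous_abs isOpen_Iio)
  · -- f ∈ U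
    intro α _
    have hcoe : coeff α (((⟨C c * (∑ i : Fin n, X i ^ 2) ^ e, hmem⟩ : V) :
        MvPolynomial (Fin n) ℝ)) = coeff α f := rfl
    rw [hcoe, sub_self, abs_zero]
    exact hε0
end

section
/- Let g and q be forms of degree 2e such that g^k(g-q) and q^k(g-q) are sos for some k ≥ 1, and g, q are sos. Then for every r ≥ 2k, the form g^r - q^r is a sum of squares. -/
open MvPolynomial Finsupp

lemma sos_zero (n d : ℕ) : IsSOSForm n d 0 :=
  ⟨0, fun i => i.elim0, fun i => i.elim0, by simp⟩

lemma sos_add {n d : ℕ} {f h : MvPolynomial (Fin n) ℝ}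
    (hf : IsSOSForm n d f) (hh : IsSOSForm n d h) : IsSOSForm n d (f + h) := by
  obtain ⟨N, a, ha, rfl⟩ := hf
  obtain ⟨M, b, hb, rfl⟩ := hh
  refine ⟨N + M, Fin.append a b, ?_, ?_⟩
  · intro i
    cases i using Fin.addCases with
    | left i => rw [Fin.append_left]; exact ha i
    | right i => rw [Fin.append_right]; exact hb i
  · rw [Fin.sum_univ_add]
    simp [Fin.append_left, Fin.append_right]

lemma sos_mul {n d₁ d₂ : ℕ} {f h : MvPolynomial (Fin n) ℝ}
    (hf : IsSOSForm n d₁ f) (hh : IsSOSForm n d₂ h) : IsSOSForm n (d₁ + d₂) (f * h) := by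
  obtain ⟨N, a, ha, rfl⟩ := hf
  obtain ⟨M, b, hb, rfl⟩ := hh
  refine ⟨N * M, fun i => a (finProdFinEquiv.symm i).1 * b (finProdFinEquiv.symm i).2,
    fun i => (ha _).mul (hb _), ?_⟩
  rw [Finset.sum_mul_sum]
  rw [show (∑ i : Fin (N * M),
      (a (finProdFinEquiv.symm i).1 * b (finProdFinEquiv.symm i).2) ^ 2) =
      ∑ p : Fin N × Fin M, (a p.1 * b p.2) ^ 2 from
    Fintype.sum_equiv finProdFinEquiv.symm _ _ (fun i => rfl)]
  rw [Fintype.sum_prod_type]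
  simp [mul_pow]

lemma sos_one (n : ℕ) : IsSOSForm n 0 1 :=
  ⟨1, fun _ => 1, fun _ => isHomogeneous_one _ _, by simp⟩

lemma sos_pow {n d : ℕ} {f : MvPolynomial (Fin n) ℝ} (hf : IsSOSForm n d f) (m : ℕ) :
    IsSOSForm n (d * m) (f ^ m) := by
  induction m with
  | zero => simpa using sos_one n
  | succ m ih =>
    have := sos_mul ih hf
    rw [Nat.mul_succ]
    rw [pow_succ]
    exact this

theorem pow_sub_pow_sos (n e k : ℕ) (hk : 1 ≤ k) (g q : MvPolynomial (Fin n) ℝ)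
    (hg : g.IsHomogeneous (2 * e)) (hq : q.IsHomogeneous (2 * e))
    (hgs : IsSOSForm n e g) (hqs : IsSOSForm n e q)
    (h1 : IsSOSForm n (e * (k + 1)) (g ^ k * (g - q)))
    (h2 : IsSOSForm n (e * (k + 1)) (q ^ k * (g - q))) :
    ∀ r : ℕ, 2 * k ≤ r → IsSOSForm n (e * r) (g ^ r - q ^ r) := by
  intro r hr
  have key : g ^ r - q ^ r = ∑ j ∈ Finset.range r, g ^ j * q ^ (r - 1 - j) * (g - q) := by
    rw [← Finset.sum_mul, geom_sum₂_mul]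
  rw [key]
  refine Finset.sum_induction _ (IsSOSForm n (e * r)) (fun _ _ => sos_add) (sos_zero n _) ?_
  intro j hj
  have hjr : j < r := Finset.mem_range.mp hj
  rcases le_or_gt k j with h | h
  · have hterm : g ^ j * q ^ (r - 1 - j) * (g - q)
        = g ^ (j - k) * q ^ (r - 1 - j) * (g ^ k * (g - q)) := by
      have : g ^ j = g ^ (j - k) * g ^ k := by rw [← pow_add, Nat.sub_add_cancel h]
      rw [this]; ring
    rw [hterm]
    have hs := sos_mul (sos_mul (sos_pow hgs (j - k)) (sos_pow hqs (r - 1 - j))) h1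
    have hd : e * (j - k) + e * (r - 1 - j) + e * (k + 1) = e * r := by
      rw [← Nat.mul_add, ← Nat.mul_add]; congr 1; omega
    rwa [hd] at hs
  · have hkle : k ≤ r - 1 - j := by omega
    have hterm : g ^ j * q ^ (r - 1 - j) * (g - q)
        = g ^ j * q ^ (r - 1 - j - k) * (q ^ k * (g - q)) := by
      have : q ^ (r - 1 - j) = q ^ (r - 1 - j - k) * q ^ k := by
        rw [← pow_add, Nat.sub_add_cancel hkle]
      rw [this]; ring
    rw [hterm]
    have hs := sos_mul (sos_mul (sos_pow hgs j) (sos_pow hqs (r - 1 - j - k))) h2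
    have hd : e * j + e * (r - 1 - j - k) + e * (k + 1) = e * r := by
      rw [← Nat.mul_add, ← Nat.mul_add]; congr 1; omega
    rwa [hd] at hs
end
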